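/- Consider a biased random walk Y₀, Y₁, … on ℤ where at each step the walk decreases by 1 with probability 1/2 + ε and increases by 1 with probability 1/2 - ε, for ε ∈ (0, 1/4). For any integer I and any δ > 0, with probability at least 1 - δ the walk visits I at most (1/(4ε²)) · ln(1/(4ε²δ)) times. -/

import Mathlib

open MeasureTheory ProbabilityTheory Finset

section bwaux

variable {Ω : Type*} [MeasurableSpace Ω] {μ : Measure Ω}

lemma bw_all_meas {S : Finset ℕ} (G : Set (↥S → ℤ)) : MeasurableSet G := by
  have h1 : G = ⋃ v ∈ G, {v} := by simp
  rw [h1]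
  exact MeasurableSet.biUnion (Set.to_countable G)
    (fun v _ => measurableSet_singleton v)

lemma bw_indep_helper (steps : ℕ → Ω → ℤ) (hmeas : ∀ n, Measurable (steps n))
    (hind : iIndepFun steps μ)
    (S T : Finset ℕ) (hST : Disjoint S T) (A B : Set Ω)
    (hA : ∀ ω ω', (∀ k ∈ S, steps k ω = steps k ω') → ω ∈ A → ω' ∈ A)
    (hB : ∀ ω ω', (∀ k ∈ T, steps k ω = steps k ω') → ω ∈ B → ω' ∈ B) :
    μ (A ∩ B) = μ A * μ B := by
  classical
  set Φ : Ω → (↥S → ℤ) := fun ω k => steps k ω with hΦ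
  set Ψ : Ω → (↥T → ℤ) := fun ω k => steps k ω with hΨ
  have hIF : IndepFun Φ Ψ μ := hind.indepFun_finset S T hST hmeas
  have hAeq : A = Φ ⁻¹' {v | ∀ ω', Φ ω' = v → ω' ∈ A} := by
    ext ω
    constructor
    · intro hω ω' h
      exact hA ω ω' (fun k hk => (congrFun h ⟨k, hk⟩).symm) hω
    · intro h; exact h ω rfl
  have hBeq : B = Ψ ⁻¹' {v | ∀ ω', Ψ ω' = v → ω' ∈ B} := by
    ext ω
    constructor
    · intro hω ω' h
      exact hB ω ω' (fun k hk => (congrFun h ⟨k, hk⟩).symm) hω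
    · intro h; exact h ω rfl
  rw [hAeq, hBeq]
  exact hIF.measure_inter_preimage_eq_mul _ _ (bw_all_meas _) (bw_all_meas _)

lemma bw_sum_identity (steps : ℕ → Ω → ℤ)
    (hval : ∀ n ω, steps n ω = -1 ∨ steps n ω = 1) (s : Finset ℕ) (ω : Ω) :
    ∑ k ∈ s, steps k ω
      = 2 * ((s.filter (fun k => steps k ω = 1)).card : ℤ) - s.card := by
  classical
  have h1 : ∑ k ∈ s.filter (fun k => steps k ω = 1), steps k ω
      = ((s.filter (fun k => steps k ω = 1)).card : ℤ) := by
    rw [Finset.sum_congr rfl (fun k hk => (Finset.mem_filter.mp hk).2)]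
    simp
  have h2 : ∑ k ∈ s.filter (fun k => ¬ steps k ω = 1), steps k ω
      = -(((s.filter (fun k => ¬ steps k ω = 1)).card : ℤ)) := by
    have : ∀ k ∈ s.filter (fun k => ¬ steps k ω = 1), steps k ω = -1 := by
      intro k hk
      rcases hval k ω with h | h
      · exact h
      · exact absurd h (Finset.mem_filter.mp hk).2
    rw [Finset.sum_congr rfl this]
    simp
  have h3 : (s.filter (fun k => steps k ω = 1)).card
      + (s.filter (fun k => ¬ steps k ω = 1)).card = s.card :=
    Finset.card_filter_add_card_filter_not (s := s) (p := fun k => steps k ω = 1)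
  have h4 := Finset.sum_filter_add_sum_filter_not s (fun k => steps k ω = 1)
    (fun k => steps k ω)
  rw [← h4, h1, h2]
  have h3' : ((s.filter (fun k => steps k ω = 1)).card : ℤ)
      + ((s.filter (fun k => ¬ steps k ω = 1)).card : ℤ) = s.card := by
    exact_mod_cast congrArg (Nat.cast (R := ℤ)) h3
  omega

lemma bw_sum_le (steps : ℕ → Ω → ℤ)
    (hval : ∀ n ω, steps n ω = -1 ∨ steps n ω = 1) (s : Finset ℕ) (ω : Ω) :
    |∑ k ∈ s, steps k ω| ≤ (s.card : ℤ) := by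
  classical
  have h := bw_sum_identity steps hval s ω
  have h2 : ((s.filter (fun k => steps k ω = 1)).card : ℤ) ≤ s.card := by
    exact_mod_cast Finset.card_le_card (Finset.filter_subset _ _)
  have h3 : (0:ℤ) ≤ ((s.filter (fun k => steps k ω = 1)).card : ℤ) := by positivity
  rw [abs_le]; omega

lemma bw_dist (μ : Measure Ω) [IsProbabilityMeasure μ] (ε : ℝ) (hε0 : 0 < ε) (hε4 : ε < 1 / 4)
    (steps : ℕ → Ω → ℤ) (hmeas : ∀ n, Measurable (steps n))
    (hval : ∀ n ω, steps n ω = -1 ∨ steps n ω = 1)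
    (hind : iIndepFun steps μ)
    (hdown : ∀ n, μ {ω | steps n ω = -1} = ENNReal.ofReal (1 / 2 + ε))
    (hup : ∀ n, μ {ω | steps n ω = 1} = ENNReal.ofReal (1 / 2 - ε)) :
    ∀ (n t j : ℕ), j ≤ n →
      μ {ω | ∑ k ∈ Finset.Ico t (t + n), steps k ω = 2 * (j : ℤ) - (n : ℤ)}
        = ENNReal.ofReal ((n.choose j : ℝ) * (1 / 2 - ε) ^ j * (1 / 2 + ε) ^ (n - j)) := by
  have hq0 : (0:ℝ) < 1 / 2 - ε := by linarith
  have hp0 : (0:ℝ) < 1 / 2 + ε := by linarith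
  intro n
  induction n with
  | zero =>
    intro t j hj
    interval_cases j
    have : {ω : Ω | ∑ k ∈ Finset.Ico t (t + 0), steps k ω = 2 * ((0:ℕ) : ℤ) - ((0:ℕ) : ℤ)}
        = Set.univ := by
      ext ω; simp
    rw [this]
    simp
  | succ n ih =>
    intro t j hj
    have hsplit : ∀ ω : Ω, ∑ k ∈ Finset.Ico t (t + (n+1)), steps k ω
        = (∑ k ∈ Finset.Ico t (t + n), steps k ω) + steps (t + n) ω := by
      intro ω
      have : t + (n + 1) = (t + n) + 1 := by omega
      rw [this, Finset.sum_Ico_succ_top (by omega)]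
    have hmsum : Measurable (fun ω => ∑ k ∈ Finset.Ico t (t + n), steps k ω) :=
      Finset.measurable_sum _ (fun i _ => hmeas i)
    have hIF : IndepFun (∑ k ∈ Finset.Ico t (t + n), steps k) (steps (t + n)) μ :=
      hind.indepFun_finsetSum_of_notMem hmeas (by simp)
    have hfac : ∀ (a z : ℤ),
        μ ({ω | ∑ k ∈ Finset.Ico t (t + n), steps k ω = a} ∩ {ω | steps (t + n) ω = z})
          = μ {ω | ∑ k ∈ Finset.Ico t (t + n), steps k ω = a} * μ {ω | steps (t + n) ω = z} := by
      intro a z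
      have e1 : {ω | ∑ k ∈ Finset.Ico t (t + n), steps k ω = a}
          = (∑ k ∈ Finset.Ico t (t + n), steps k) ⁻¹' {a} := by
        ext ω; simp [Finset.sum_apply]
      have e2 : {ω | steps (t + n) ω = z} = (steps (t + n)) ⁻¹' {z} := by
        ext ω; simp
      rw [e1, e2]
      exact hIF.measure_inter_preimage_eq_mul _ _ (measurableSet_singleton a)
        (measurableSet_singleton z)
    set s : ℤ := 2 * (j : ℤ) - ((n:ℤ) + 1) with hs
    have hdecomp : {ω : Ω | ∑ k ∈ Finset.Ico t (t + (n+1)), steps k ω = s}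
        = ({ω | ∑ k ∈ Finset.Ico t (t + n), steps k ω = s + 1} ∩ {ω | steps (t + n) ω = -1})
          ∪ ({ω | ∑ k ∈ Finset.Ico t (t + n), steps k ω = s - 1} ∩ {ω | steps (t + n) ω = 1}) := by
      ext ω
      simp only [Set.mem_setOf_eq, Set.mem_union, Set.mem_inter_iff, hsplit ω]
      rcases hval (t + n) ω with h | h <;> rw [h] <;> constructor <;> intro hh
      · left; constructor; omega; rfl
      · rcases hh with ⟨h1, _⟩ | ⟨h1, h2⟩
        · omega
        · omega
      · right; constructor; omega; rfl
      · rcases hh with ⟨h1, h2⟩ | ⟨h1, _⟩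
        · omega
        · omega
    have hdisj : Disjoint
        ({ω : Ω | ∑ k ∈ Finset.Ico t (t + n), steps k ω = s + 1} ∩ {ω | steps (t + n) ω = -1})
        ({ω : Ω | ∑ k ∈ Finset.Ico t (t + n), steps k ω = s - 1} ∩ {ω | steps (t + n) ω = 1}) := by
      rw [Set.disjoint_iff]
      rintro ω ⟨⟨_, h1⟩, ⟨_, h2⟩⟩
      simp only [Set.mem_setOf_eq] at h1 h2
      omega
    have hmeasA : ∀ (a : ℤ), MeasurableSet {ω : Ω | ∑ k ∈ Finset.Ico t (t + n), steps k ω = a} :=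
      fun a => hmsum (measurableSet_singleton a)
    have hmeasD : ∀ (z : ℤ), MeasurableSet {ω : Ω | steps (t + n) ω = z} :=
      fun z => (hmeas (t + n)) (measurableSet_singleton z)
    rw [show (2 * (j:ℤ) - ((n+1 : ℕ):ℤ)) = s from by rw [hs]; push_cast; ring]
    rw [hdecomp, measure_union hdisj ((hmeasA _).inter (hmeasD _)), hfac, hfac,
      hdown, hup]
    rcases Nat.lt_or_ge j (n + 1) with hjn | hjn
    · rcases Nat.eq_zero_or_pos j with hj0 | hj1
      · subst hj0
        have hempty : {ω : Ω | ∑ k ∈ Finset.Ico t (t + n), steps k ω = s - 1} = ∅ := by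
          ext ω
          simp only [Set.mem_setOf_eq, Set.mem_empty_iff_false, iff_false]
          intro hcon
          have := bw_sum_le steps hval (Finset.Ico t (t + n)) ω
          rw [hcon] at this
          simp only [Nat.card_Ico] at this
          rw [abs_le] at this
          omega
        have h1 : s + 1 = 2 * ((0:ℕ) : ℤ) - (n:ℤ) := by rw [hs]; push_cast; ring
        rw [hempty, h1, ih t 0 (by omega)]
        simp only [measure_empty, zero_mul, add_zero]
        rw [← ENNReal.ofReal_mul (by positivity)]
        congr 1
        simp only [Nat.choose_zero_right, Nat.cast_one, pow_zero, Nat.sub_zero]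
        rw [pow_succ]
        ring
      · obtain ⟨a, rfl⟩ : ∃ a, j = a + 1 := ⟨j - 1, by omega⟩
        obtain ⟨b, rfl⟩ : ∃ b, n = a + 1 + b := ⟨n - (a+1), by omega⟩
        have h1 : s + 1 = 2 * (((a+1):ℕ) : ℤ) - ((a+1+b:ℕ):ℤ) := by rw [hs]; push_cast; ring
        have h2 : s - 1 = 2 * ((a:ℕ) : ℤ) - ((a+1+b:ℕ):ℤ) := by rw [hs]; push_cast; ring
        rw [h1, h2, ih t (a+1) (by omega), ih t a (by omega)]
        rw [← ENNReal.ofReal_mul (by positivity), ← ENNReal.ofReal_mul (by positivity),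
          ← ENNReal.ofReal_add (by positivity) (by positivity)]
        congr 1
        have hchoose : ((a+1+b+1).choose (a+1) : ℝ)
            = ((a+1+b).choose (a+1) : ℝ) + ((a+1+b).choose a : ℝ) := by
          have : a + 1 + b + 1 = (a + 1 + b) + 1 := by omega
          rw [this, Nat.choose_succ_succ (a+1+b) a]
          push_cast; ring
        have he1 : a + 1 + b + 1 - (a + 1) = b + 1 := by omega
        have he2 : a + 1 + b - a = b + 1 := by omega
        have he3 : a + 1 + b - (a + 1) = b := by omega
        rw [hchoose, he1, he2, he3]
        ring
    · have hj' : j = n + 1 := by omega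
      subst hj'
      have hempty : {ω : Ω | ∑ k ∈ Finset.Ico t (t + n), steps k ω = s + 1} = ∅ := by
        ext ω
        simp only [Set.mem_setOf_eq, Set.mem_empty_iff_false, iff_false]
        intro hcon
        have := bw_sum_le steps hval (Finset.Ico t (t + n)) ω
        rw [hcon] at this
        simp only [Nat.card_Ico] at this
        rw [abs_le] at this
        omega
      have h2 : s - 1 = 2 * (((n+1-1):ℕ) : ℤ) - (n:ℤ) := by rw [hs]; push_cast; ring
      rw [hempty, h2, ih t (n+1-1) (by omega)]
      simp only [measure_empty, zero_mul, zero_add]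
      rw [← ENNReal.ofReal_mul (by positivity)]
      congr 1
      simp only [Nat.choose_self, Nat.cast_one, Nat.sub_self, pow_zero,
        Nat.add_sub_cancel]
      rw [pow_succ]
      ring

lemma bw_central (i : ℕ) (hi : 1 ≤ i) : 2 * Nat.centralBinom i ≤ 4 ^ i := by
  induction i with
  | zero => omega
  | succ n ihn =>
    rcases Nat.eq_zero_or_pos n with h0 | h1
    · subst h0
      simp [Nat.centralBinom, Nat.choose]
    · have key := Nat.succ_mul_centralBinom_succ n
      have h2 : (n + 1) * Nat.centralBinom (n + 1) ≤ (n + 1) * (4 * Nat.centralBinom n) := by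
        rw [key]
        have : 2 * (2 * n + 1) ≤ 4 * (n + 1) := by omega
        calc 2 * (2 * n + 1) * Nat.centralBinom n ≤ 4 * (n + 1) * Nat.centralBinom n :=
              Nat.mul_le_mul_right _ this
          _ = (n + 1) * (4 * Nat.centralBinom n) := by ring
      have h3 : Nat.centralBinom (n + 1) ≤ 4 * Nat.centralBinom n :=
        Nat.le_of_mul_le_mul_left h2 (by omega)
      calc 2 * Nat.centralBinom (n + 1) ≤ 2 * (4 * Nat.centralBinom n) := by omega
        _ = 4 * (2 * Nat.centralBinom n) := by ring
        _ ≤ 4 * 4 ^ n := by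
            have := ihn h1
            omega
        _ = 4 ^ (n + 1) := by ring

end bwaux

theorem biased_walk_visits (Ω : Type*) [MeasurableSpace Ω] (μ : Measure Ω)
    [IsProbabilityMeasure μ] (ε δ : ℝ) (hε0 : 0 < ε) (hε4 : ε < 1 / 4) (hδ : 0 < δ)
    (steps : ℕ → Ω → ℤ) (hmeas : ∀ n, Measurable (steps n))
    (hval : ∀ n ω, steps n ω = -1 ∨ steps n ω = 1)
    (hind : iIndepFun steps μ)
    (hdown : ∀ n, μ {ω | steps n ω = -1} = ENNReal.ofReal (1 / 2 + ε))
    (hup : ∀ n, μ {ω | steps n ω = 1} = ENNReal.ofReal (1 / 2 - ε))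
    (Y₀ I : ℤ) :
    μ {ω | ∃ S : Finset ℕ,
        (1 / (4 * ε ^ 2)) * Real.log (1 / (4 * ε ^ 2 * δ)) < (S.card : ℝ) ∧
        ∀ n ∈ S, Y₀ + ∑ k ∈ Finset.range n, steps k ω = I} ≤ ENNReal.ofReal δ := by
  classical
  set x : ℝ := 4 * ε ^ 2 with hxdef
  set L : ℝ := (1 / x) * Real.log (1 / (x * δ)) with hLdef
  have hx0 : 0 < x := by positivity
  have hx4 : x < 1 / 4 := by nlinarith
  have hxδ : 0 < x * δ := by positivity
  have hlogL : x * L = Real.log (1 / (x * δ)) := by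
    rw [hLdef]; field_simp
  have hexp43 : Real.exp x ≤ 4 / 3 := by
    have hx1 : x < 1 := by linarith
    have := Real.add_one_le_exp (-x)
    have hpos : (0:ℝ) < Real.exp (-x) := Real.exp_pos _
    have hxq : (3:ℝ)/4 ≤ Real.exp (-x) := by linarith
    rw [Real.exp_neg] at hxq
    have hepos : (0:ℝ) < Real.exp x := Real.exp_pos _
    have := (mul_le_mul_iff_left₀ hepos).mpr hxq
    rw [inv_mul_cancel₀ (ne_of_gt hepos)] at this
    nlinarith
  rcases lt_or_ge L 1 with hL1 | hL1
  · -- trivial case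
    have h1 : Real.log (1 / (x * δ)) < x := by
      rw [← hlogL]
      calc x * L < x * 1 := by exact (mul_lt_mul_iff_right₀ hx0).mpr hL1
        _ = x := mul_one x
    have h2 : 1 / (x * δ) < Real.exp x := by
      rw [← Real.exp_log (by positivity : (0:ℝ) < 1 / (x * δ))]
      exact Real.exp_lt_exp.mpr h1
    have h4 : (1:ℝ) ≤ δ := by
      have h5 : 1 / (x * δ) < 4 / 3 := lt_of_lt_of_le h2 hexp43
      have h6 : 3 / 4 < x * δ := by
        rw [div_lt_div_iff₀ hxδ (by norm_num : (0:ℝ) < 3)] at h5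
        linarith
      nlinarith
    calc μ _ ≤ 1 := prob_le_one
      _ = ENNReal.ofReal 1 := ENNReal.ofReal_one.symm
      _ ≤ ENNReal.ofReal δ := ENNReal.ofReal_le_ofReal h4
  · -- main case
    have hL0 : 0 ≤ L := by linarith
    have h1x0 : (0:ℝ) < 1 - x := by linarith
    have h1x1 : (1:ℝ) - x < 1 := by linarith
    set N₀ : ℕ := Nat.floor L with hN₀def
    have hN₀1 : 1 ≤ N₀ := Nat.le_floor (by exact_mod_cast hL1)
    have hN₀L : (N₀ : ℝ) ≤ L := Nat.floor_le hL0
    have hLN₀ : L - 1 ≤ (N₀ : ℝ) := le_of_lt (Nat.sub_one_lt_floor L)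
    set Bset : ℕ → ℕ → Set Ω :=
      fun t i => {ω | ∑ k ∈ Finset.Ico t (t + 2*i), steps k ω = 0} with hBdef
    set F : ℕ → Set Ω := fun t =>
      {ω | (Y₀ + ∑ k ∈ Finset.range t, steps k ω = I)
        ∧ ∀ s, s < t → ¬ (Y₀ + ∑ k ∈ Finset.range s, steps k ω = I)} with hFdef
    -- measurability
    have hPmeas : ∀ n : ℕ,
        MeasurableSet {ω : Ω | Y₀ + ∑ k ∈ Finset.range n, steps k ω = I} := by
      intro n
      have hm : Measurable (fun ω : Ω => ∑ k ∈ Finset.range n, steps k ω) :=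
        Finset.measurable_sum _ (fun i _ => hmeas i)
      have he : {ω : Ω | Y₀ + ∑ k ∈ Finset.range n, steps k ω = I}
          = (fun ω : Ω => ∑ k ∈ Finset.range n, steps k ω) ⁻¹' {I - Y₀} := by
        ext ω; simp only [Set.mem_setOf_eq, Set.mem_preimage, Set.mem_singleton_iff]; omega
      rw [he]
      exact hm (measurableSet_singleton _)
    have hFmeas : ∀ t, MeasurableSet (F t) := by
      intro t
      have he : F t = {ω : Ω | Y₀ + ∑ k ∈ Finset.range t, steps k ω = I}
          ∩ ⋂ s ∈ Set.Iio t, {ω : Ω | Y₀ + ∑ k ∈ Finset.range s, steps k ω = I}ᶜ := by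
        ext ω
        simp only [hFdef, Set.mem_setOf_eq, Set.mem_inter_iff, Set.mem_iInter,
          Set.mem_compl_iff, Set.mem_Iio]
      rw [he]
      exact (hPmeas t).inter
        (MeasurableSet.biInter (Set.to_countable _) (fun s _ => (hPmeas s).compl))
    have hFdisj : Pairwise (Function.onFun Disjoint F) := by
      intro a b hab
      rw [Function.onFun, Set.disjoint_left]
      intro ω ha hb
      rcases lt_or_gt_of_ne hab with h | h
      · exact hb.2 a h ha.1
      · exact ha.2 b h hb.1
    have hsum_le_one : ∑' t, μ (F t) ≤ 1 := by
      rw [← measure_iUnion hFdisj hFmeas]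
      exact prob_le_one
    -- measure of Bset
    have hμB : ∀ t i, μ (Bset t i)
        = ENNReal.ofReal ((((2*i).choose i : ℕ) : ℝ) * (1/2-ε) ^ i * (1/2+ε) ^ i) := by
      intro t i
      have h := bw_dist μ ε hε0 hε4 steps hmeas hval hind hdown hup (2*i) t i (by omega)
      have he : (2 * (i:ℤ) - ((2*i : ℕ) : ℤ)) = 0 := by push_cast; ring
      rw [he] at h
      have he2 : 2*i - i = i := by omega
      rw [he2] at h
      exact h
    have hμB_le : ∀ t i, 1 ≤ i → μ (Bset t i) ≤ ENNReal.ofReal ((1-x)^i / 2) := by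
      intro t i hi
      rw [hμB t i]
      apply ENNReal.ofReal_le_ofReal
      have hc : (((2*i).choose i : ℕ) : ℝ) ≤ 4 ^ i / 2 := by
        have h2 := bw_central i hi
        have h3 : ((2 * Nat.centralBinom i : ℕ) : ℝ) ≤ ((4 ^ i : ℕ) : ℝ) := by
          exact_mod_cast h2
        rw [Nat.centralBinom_eq_two_mul_choose] at h3
        push_cast at h3
        linarith
      have hqp0 : (0:ℝ) ≤ (1/2-ε) * (1/2+ε) := by nlinarith
      have h4qp : 4 * ((1/2-ε) * (1/2+ε)) = 1 - x := by rw [hxdef]; ring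
      calc (((2*i).choose i : ℕ) : ℝ) * (1/2-ε)^i * (1/2+ε)^i
          = (((2*i).choose i : ℕ) : ℝ) * ((1/2-ε) * (1/2+ε))^i := by
            rw [mul_pow]; ring
        _ ≤ (4^i / 2) * ((1/2-ε) * (1/2+ε))^i :=
            mul_le_mul_of_nonneg_right hc (by positivity)
        _ = (1-x)^i / 2 := by
            rw [← h4qp, mul_pow 4 ((1/2-ε)*(1/2+ε)) i]
            ring
    -- independence of F and Bset
    have hprod : ∀ t i, μ (F t ∩ Bset t i) = μ (F t) * μ (Bset t i) := by
      intro t i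
      apply bw_indep_helper steps hmeas hind (Finset.range t) (Finset.Ico t (t + 2*i))
      · rw [Finset.disjoint_left]
        intro k hk1 hk2
        rw [Finset.mem_range] at hk1
        rw [Finset.mem_Ico] at hk2
        omega
      · intro ω ω' h hmem
        have hs : ∀ u, u ≤ t → ∑ k ∈ Finset.range u, steps k ω' = ∑ k ∈ Finset.range u, steps k ω :=
          fun u hu => Finset.sum_congr rfl
            (fun k hk => (h k (Finset.mem_range.mpr (lt_of_lt_of_le (Finset.mem_range.mp hk) hu))).symm)
        simp only [hFdef, Set.mem_setOf_eq] at hmem ⊢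
        constructor
        · rw [hs t le_rfl]; exact hmem.1
        · intro u hu hcon
          rw [hs u (le_of_lt hu)] at hcon
          exact hmem.2 u hu hcon
      · intro ω ω' h hmem
        simp only [hBdef, Set.mem_setOf_eq] at hmem ⊢
        rw [Finset.sum_congr rfl (fun k hk => (h k hk).symm)]
        exact hmem
    -- geometric sum
    have hgeo : ∑' (j : ℕ), ENNReal.ofReal ((1-x)^(N₀ + j) / 2)
        = ENNReal.ofReal ((1-x)^N₀ / (2*x)) := by
      have h1 : ∀ j : ℕ, (1-x)^(N₀+j)/2 = ((1-x)^N₀/2) * (1-x)^j := by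
        intro j; rw [pow_add]; ring
      calc ∑' (j : ℕ), ENNReal.ofReal ((1-x)^(N₀+j)/2)
          = ∑' (j : ℕ), ENNReal.ofReal ((1-x)^N₀/2) * ENNReal.ofReal ((1-x)^j) := by
            apply tsum_congr
            intro j
            rw [h1, ENNReal.ofReal_mul (by positivity)]
        _ = ENNReal.ofReal ((1-x)^N₀/2) * ∑' (j : ℕ), ENNReal.ofReal ((1-x)^j) :=
            ENNReal.tsum_mul_left
        _ = ENNReal.ofReal ((1-x)^N₀/2) * ENNReal.ofReal (1/x) := by
            congr 1
            rw [← ENNReal.ofReal_tsum_of_nonneg (fun j => by positivity)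
              (summable_geometric_of_lt_one (by linarith) h1x1)]
            congr 1
            rw [tsum_geometric_of_lt_one (by linarith) h1x1]
            rw [show (1 - (1-x)) = x from by ring, one_div]
        _ = ENNReal.ofReal ((1-x)^N₀/(2*x)) := by
            rw [← ENNReal.ofReal_mul (by positivity)]
            congr 1
            field_simp
    -- inclusion
    have hincl : {ω : Ω | ∃ S : Finset ℕ, L < (S.card : ℝ)
          ∧ ∀ n ∈ S, Y₀ + ∑ k ∈ Finset.range n, steps k ω = I}
        ⊆ ⋃ (t : ℕ), ⋃ (j : ℕ), F t ∩ Bset t (N₀ + j) := by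
      rintro ω ⟨S, hcard, hvis⟩
      have hcard1 : 1 ≤ S.card := by
        by_contra hcon
        push_neg at hcon
        have h0 : S.card = 0 := by omega
        rw [h0] at hcard
        simp only [Nat.cast_zero] at hcard
        linarith
      have hSne : S.Nonempty := Finset.card_pos.mp (by omega)
      have hVne : Y₀ + ∑ k ∈ Finset.range (S.min' hSne), steps k ω = I :=
        hvis _ (S.min'_mem hSne)
      set t := sInf {n : ℕ | Y₀ + ∑ k ∈ Finset.range n, steps k ω = I} with htdef
      have hVt : Y₀ + ∑ k ∈ Finset.range t, steps k ω = I :=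
        Nat.sInf_mem (⟨S.min' hSne, hVne⟩ :
          Set.Nonempty {n : ℕ | Y₀ + ∑ k ∈ Finset.range n, steps k ω = I})
      have htmin : ∀ s, s < t → ¬ (Y₀ + ∑ k ∈ Finset.range s, steps k ω = I) :=
        fun s hs hVs => (Nat.sInf_le hVs).not_gt hs
      have ht_le : ∀ n ∈ S, t ≤ n := fun n hn => Nat.sInf_le (hvis n hn)
      set t' := S.max' hSne with ht'def
      have hVt' : Y₀ + ∑ k ∈ Finset.range t', steps k ω = I := hvis _ (S.max'_mem hSne)
      set cf : ℕ → ℕ :=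
        fun n => ((Finset.Ico t n).filter (fun k => steps k ω = 1)).card with hcdef
      have hsum0 : ∀ n, t ≤ n → (Y₀ + ∑ k ∈ Finset.range n, steps k ω = I) →
          ∑ k ∈ Finset.Ico t n, steps k ω = 0 := by
        intro n htn hVn
        rw [Finset.sum_Ico_eq_sub _ htn]
        omega
      have hkey : ∀ n, t ≤ n → (Y₀ + ∑ k ∈ Finset.range n, steps k ω = I) →
          n = t + 2 * cf n := by
        intro n htn hVn
        have hid := bw_sum_identity steps hval (Finset.Ico t n) ω
        rw [hsum0 n htn hVn, Nat.card_Ico] at hid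
        have h2 : ((n - t : ℕ) : ℤ) = 2 * ((cf n : ℕ) : ℤ) := by
          show ((n - t : ℕ) : ℤ)
            = 2 * ((((Finset.Ico t n).filter (fun k => steps k ω = 1)).card : ℕ) : ℤ)
          omega
        have h3 : n - t = 2 * cf n := by exact_mod_cast h2
        omega
      have hct' : t' = t + 2 * cf t' := hkey t' (ht_le t' (S.max'_mem hSne)) hVt'
      have hcmono : ∀ n ∈ S, cf n ≤ cf t' := by
        intro n hn
        show ((Finset.Ico t n).filter (fun k => steps k ω = 1)).card
          ≤ ((Finset.Ico t t').filter (fun k => steps k ω = 1)).card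
        apply Finset.card_le_card
        apply Finset.filter_subset_filter
        exact Finset.Ico_subset_Ico le_rfl (S.le_max' n hn)
      have hSsub : S ⊆ (Finset.range (cf t' + 1)).image (fun j => t + 2 * j) := by
        intro n hn
        rw [Finset.mem_image]
        exact ⟨cf n, Finset.mem_range.mpr (Nat.lt_succ_of_le (hcmono n hn)),
          (hkey n (ht_le n hn) (hvis n hn)).symm⟩
      have hcard2 : S.card ≤ cf t' + 1 := by
        calc S.card ≤ ((Finset.range (cf t' + 1)).image (fun j => t + 2 * j)).card :=
              Finset.card_le_card hSsub
          _ ≤ (Finset.range (cf t' + 1)).card := Finset.card_image_le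
          _ = cf t' + 1 := Finset.card_range _
      have hN₀S : N₀ < S.card := by
        have h5 : (N₀ : ℝ) < (S.card : ℝ) := lt_of_le_of_lt hN₀L hcard
        exact_mod_cast h5
      have hiN : N₀ ≤ cf t' := by omega
      refine Set.mem_iUnion.mpr ⟨t, Set.mem_iUnion.mpr ⟨cf t' - N₀, ⟨⟨hVt, htmin⟩, ?_⟩⟩⟩
      simp only [hBdef, Set.mem_setOf_eq]
      rw [show N₀ + (cf t' - N₀) = cf t' from by omega]
      rw [show t + 2 * cf t' = t' from hct'.symm]
      exact hsum0 t' (ht_le t' (S.max'_mem hSne)) hVt'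
    -- final real inequality
    have hfinal : (1-x)^N₀ / (2*x) ≤ δ := by
      have hkey : (1-x)^N₀ ≤ 2 * x * δ := by
        calc ((1-x):ℝ)^N₀ = (1-x) ^ ((N₀:ℕ) : ℝ) := (Real.rpow_natCast _ _).symm
          _ ≤ (1-x) ^ (L - 1) :=
              Real.rpow_le_rpow_of_exponent_ge h1x0 (le_of_lt h1x1) hLN₀
          _ = Real.exp (Real.log (1-x) * (L-1)) := Real.rpow_def_of_pos h1x0 _
          _ ≤ Real.exp ((-x) * (L-1)) := by
              apply Real.exp_le_exp.mpr
              apply mul_le_mul_of_nonneg_right _ (by linarith : (0:ℝ) ≤ L - 1)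
              have := Real.log_le_sub_one_of_pos h1x0
              linarith
          _ = Real.exp (-(x*L)) * Real.exp x := by rw [← Real.exp_add]; ring_nf
          _ = (x*δ) * Real.exp x := by
              congr 1
              rw [hlogL, one_div, Real.log_inv, neg_neg, Real.exp_log hxδ]
          _ ≤ (x*δ) * (4/3) := mul_le_mul_of_nonneg_left hexp43 (le_of_lt hxδ)
          _ ≤ 2 * x * δ := by nlinarith
      rw [div_le_iff₀ (by positivity)]
      nlinarith
    -- assembly
    calc μ {ω : Ω | ∃ S : Finset ℕ, L < (S.card : ℝ)
          ∧ ∀ n ∈ S, Y₀ + ∑ k ∈ Finset.range n, steps k ω = I}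
        ≤ μ (⋃ (t : ℕ), ⋃ (j : ℕ), F t ∩ Bset t (N₀ + j)) := measure_mono hincl
      _ ≤ ∑' (t : ℕ), μ (⋃ (j : ℕ), F t ∩ Bset t (N₀ + j)) := measure_iUnion_le _
      _ ≤ ∑' (t : ℕ), ∑' (j : ℕ), μ (F t ∩ Bset t (N₀ + j)) :=
          ENNReal.tsum_le_tsum (fun t => measure_iUnion_le _)
      _ = ∑' (t : ℕ), ∑' (j : ℕ), μ (F t) * μ (Bset t (N₀ + j)) := by
          apply tsum_congr; intro t; apply tsum_congr; intro j
          exact hprod t (N₀ + j)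
      _ ≤ ∑' (t : ℕ), ∑' (j : ℕ), μ (F t) * ENNReal.ofReal ((1-x)^(N₀+j) / 2) := by
          apply ENNReal.tsum_le_tsum; intro t
          apply ENNReal.tsum_le_tsum; intro j
          exact mul_le_mul_right (hμB_le t (N₀+j) (by omega)) _
      _ = ∑' (t : ℕ), μ (F t) * ∑' (j : ℕ), ENNReal.ofReal ((1-x)^(N₀+j) / 2) := by
          apply tsum_congr; intro t
          rw [ENNReal.tsum_mul_left]
      _ = (∑' (t : ℕ), μ (F t)) * ENNReal.ofReal ((1-x)^N₀ / (2*x)) := by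
          rw [← ENNReal.tsum_mul_right]
          apply tsum_congr; intro t
          rw [hgeo]
      _ ≤ 1 * ENNReal.ofReal ((1-x)^N₀ / (2*x)) := mul_le_mul_left hsum_le_one _
      _ = ENNReal.ofReal ((1-x)^N₀ / (2*x)) := one_mul _
      _ ≤ ENNReal.ofReal δ := ENNReal.ofReal_le_ofReal hfinal
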